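/- Let P be a complex homogeneous polynomial of degree d and S = {L_1,...,L_r} a set of pairwise non-proportional complex linear forms such that P lies in the complex span of {L_1^d,...,L_r^d} and r = r_ℂ(P). Then for every proper subset E ⊊ S, the intersection of the span of {P} ∪ {L^d : L ∈ E} with the span of {L^d : L ∈ S \ E} is a single point P_1 (a one-dimensional subspace), and the set S \ E computes the complex symmetric rank of P_1, i.e. r_ℂ(P_1) = r - #E. -/

import Mathlib

open MvPolynomial

/-- The complex symmetric rank of `P` with respect to degree `d`. -/
noncomputable def cRank {n : ℕ} (d : ℕ) (P : MvPolynomial (Fin n) ℂ) : ℕ :=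
  sInf {r : ℕ | ∃ (c : Fin r → ℂ) (L : Fin r → MvPolynomial (Fin n) ℂ),
    (∀ i, c i ≠ 0) ∧ (∀ i, (L i).IsHomogeneous 1) ∧ P = ∑ i, c i • L i ^ d}

lemma exists_rep_of_mem_span {n d : ℕ} (P : MvPolynomial (Fin n) ℂ)
    (T : Finset (MvPolynomial (Fin n) ℂ)) (hT : ∀ L ∈ T, L.IsHomogeneous 1)
    (h : P ∈ Submodule.span ℂ ((fun L => L ^ d) '' (T : Set _))) :
    ∃ k ≤ T.card, k ∈ {r : ℕ | ∃ (c : Fin r → ℂ) (L : Fin r → MvPolynomial (Fin n) ℂ),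
      (∀ i, c i ≠ 0) ∧ (∀ i, (L i).IsHomogeneous 1) ∧ P = ∑ i, c i • L i ^ d} := by
  classical
  have himg : ((fun L => L ^ d) '' ((T : Finset (MvPolynomial (Fin n) ℂ)) : Set (MvPolynomial (Fin n) ℂ))) = ((T.image (fun L => L ^ d) : Finset (MvPolynomial (Fin n) ℂ)) : Set (MvPolynomial (Fin n) ℂ)) :=
    (Finset.coe_image).symm
  rw [himg] at h
  obtain ⟨f, -, hf⟩ := Submodule.mem_span_finset.mp h
  set U : Finset (MvPolynomial (Fin n) ℂ) := (T.image (fun L => L ^ d)).filter (fun y => f y ≠ 0) with hU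
  have hsum : ∑ y ∈ U, f y • y = P := by
    rw [← hf]
    apply Finset.sum_subset (Finset.filter_subset _ _)
    intro y hy hyn
    have : f y = 0 := by
      by_contra hfy
      exact hyn (Finset.mem_filter.mpr ⟨hy, hfy⟩)
    simp [this]
  have hroot : ∀ y ∈ U, ∃ L, L.IsHomogeneous 1 ∧ L ^ d = y := by
    intro y hy
    obtain ⟨L, hL, hLy⟩ := Finset.mem_image.mp ((Finset.filter_subset _ _) hy)
    exact ⟨L, hT L hL, hLy⟩
  choose g hg1 hg2 using hroot
  refine ⟨U.card, le_trans (Finset.card_filter_le _ _) (Finset.card_image_le), ?_⟩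
  refine ⟨fun i => f (U.equivFin.symm i : _), fun i => g (U.equivFin.symm i : _) (U.equivFin.symm i).2,
    ?_, ?_, ?_⟩
  · intro i
    exact (Finset.mem_filter.mp (U.equivFin.symm i).2).2
  · intro i
    exact hg1 _ _
  · rw [← hsum, ← Finset.sum_coe_sort U (fun y => f y • y)]
    rw [← Equiv.sum_comp U.equivFin.symm (fun y : U => f (y : MvPolynomial (Fin n) ℂ) • (y : MvPolynomial (Fin n) ℂ))]
    apply Finset.sum_congr rfl
    intro i _
    rw [hg2 _ (U.equivFin.symm i).2]

lemma cRank_le_card {n d : ℕ} (P : MvPolynomial (Fin n) ℂ)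
    (T : Finset (MvPolynomial (Fin n) ℂ)) (hT : ∀ L ∈ T, L.IsHomogeneous 1)
    (h : P ∈ Submodule.span ℂ ((fun L => L ^ d) '' (T : Set _))) :
    cRank d P ≤ T.card := by
  obtain ⟨k, hk, hmem⟩ := exists_rep_of_mem_span P T hT h
  exact le_trans (Nat.sInf_le hmem) hk

lemma img_eq {n : ℕ} (d : ℕ) (T : Finset (MvPolynomial (Fin n) ℂ)) :
    ((fun L => L ^ d) '' ((T : Finset (MvPolynomial (Fin n) ℂ)) : Set (MvPolynomial (Fin n) ℂ)))
      = ((T.image (fun L => L ^ d) : Finset (MvPolynomial (Fin n) ℂ))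
          : Set (MvPolynomial (Fin n) ℂ)) := by
  classical
  exact (Finset.coe_image).symm


/-- If `S` is a set of pairwise non-proportional linear forms evincing the complex rank of `P`,
then for every proper subset `E ⊊ S` the intersection of the span of `{P} ∪ {L^d : L ∈ E}`
with the span of `{L^d : L ∈ S \ E}` is a single (projective) point `P₁`, and `S \ E`
evinces the complex rank of `P₁`: `r_ℂ(P₁) = r - #E`. -/
theorem rank_of_partial_point {m d : ℕ} (P : MvPolynomial (Fin (m + 1)) ℂ)
    (hP : P.IsHomogeneous d)
    (S : Finset (MvPolynomial (Fin (m + 1)) ℂ))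
    (hS1 : ∀ L ∈ S, L.IsHomogeneous 1)
    (hSprop : ∀ L ∈ S, ∀ L' ∈ S, L ≠ L' → ∀ a : ℂ, L ≠ a • L')
    (hPS : P ∈ Submodule.span ℂ ((fun L => L ^ d) '' (S : Set _)))
    (hcard : S.card = cRank d P)
    (E : Finset (MvPolynomial (Fin (m + 1)) ℂ)) (hES : E ⊆ S) (hEne : E ≠ S) :
    ∃ P₁ : MvPolynomial (Fin (m + 1)) ℂ, P₁ ≠ 0 ∧
      Submodule.span ℂ ({P} ∪ (fun L => L ^ d) '' (E : Set _)) ⊓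
          Submodule.span ℂ ((fun L => L ^ d) '' ((S \ E : Finset _) : Set _)) =
        Submodule.span ℂ {P₁} ∧
      cRank d P₁ = S.card - E.card := by
  classical
  -- linear independence of the powers
  have hind : LinearIndependent ℂ
      (fun i : {x // x ∈ S} => (i : MvPolynomial (Fin (m + 1)) ℂ) ^ d) := by
    by_contra hni
    rw [Fintype.not_linearIndependent_iff] at hni
    obtain ⟨g, hg0, i0, hi0⟩ := hni
    have hmem : ((i0 : MvPolynomial (Fin (m + 1)) ℂ) ^ d) ∈
        Submodule.span ℂ ((fun L => L ^ d) '' ((S.erase (i0 : _) : Finset _) : Set _)) := by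
      have hsum' : g i0 • ((i0 : MvPolynomial (Fin (m + 1)) ℂ) ^ d)
          + ∑ i ∈ Finset.univ.erase i0, g i • ((i : MvPolynomial (Fin (m + 1)) ℂ)) ^ d = 0 := by
        rw [Finset.add_sum_erase Finset.univ (fun i : {x // x ∈ S} => g i • ((i : MvPolynomial (Fin (m + 1)) ℂ)) ^ d) (Finset.mem_univ i0)]; exact hg0
      have heq : ((i0 : MvPolynomial (Fin (m + 1)) ℂ) ^ d)
          = (g i0)⁻¹ • (-(∑ i ∈ Finset.univ.erase i0,
              g i • ((i : MvPolynomial (Fin (m + 1)) ℂ)) ^ d)) := by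
        rw [← eq_neg_of_add_eq_zero_left hsum', smul_smul, inv_mul_cancel₀ hi0, one_smul]
      rw [heq]
      refine Submodule.smul_mem _ _ (Submodule.neg_mem _ (Submodule.sum_mem _ ?_))
      intro i hi
      refine Submodule.smul_mem _ _ (Submodule.subset_span ?_)
      refine ⟨(i : _), ?_, rfl⟩
      have hine : (i : MvPolynomial (Fin (m + 1)) ℂ) ≠ (i0 : _) :=
        Subtype.coe_injective.ne (Finset.ne_of_mem_erase hi)
      exact Finset.mem_coe.mpr (Finset.mem_erase.mpr ⟨hine, i.2⟩)
    have hPmem : P ∈ Submodule.span ℂ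
        ((fun L => L ^ d) '' ((S.erase (i0 : _) : Finset _) : Set _)) := by
      refine Submodule.span_le.mpr ?_ hPS
      rintro y ⟨L, hL, rfl⟩
      by_cases hL0 : L = (i0 : _)
      · subst hL0; exact hmem
      · exact Submodule.subset_span
          ⟨L, Finset.mem_coe.mpr (Finset.mem_erase.mpr ⟨hL0, Finset.mem_coe.mp hL⟩), rfl⟩
    have hle := cRank_le_card P (S.erase (i0 : _))
      (fun L hL => hS1 L (Finset.mem_of_mem_erase hL)) hPmem
    rw [Finset.card_erase_of_mem i0.2] at hle
    have h1 : 1 ≤ S.card := Finset.card_pos.mpr ⟨(i0 : _), i0.2⟩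
    omega
  have hinj : ∀ L ∈ S, ∀ L' ∈ S, L ^ d = L' ^ d → L = L' := by
    intro L hL L' hL' h
    exact congrArg Subtype.val (hind.injective (a₁ := ⟨L, hL⟩) (a₂ := ⟨L', hL'⟩) h)
  -- the coefficients of P
  have hPS2 := hPS
  rw [img_eq d S] at hPS2
  obtain ⟨f', -, hf'⟩ := Submodule.mem_span_finset.mp hPS2
  set c : MvPolynomial (Fin (m + 1)) ℂ → ℂ := fun L => f' (L ^ d) with hcdef
  have hcsum : ∑ L ∈ S, c L • L ^ d = P := by
    rw [← hf', Finset.sum_image hinj]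
  have hc0 : ∀ L ∈ S, c L ≠ 0 := by
    intro L0 hL0 hcL0
    have hPerase : P ∈ Submodule.span ℂ
        ((fun L => L ^ d) '' ((S.erase L0 : Finset _) : Set _)) := by
      rw [← hcsum, ← Finset.sum_erase (f := fun L => c L • L ^ d) S (show c L0 • L0 ^ d = 0 by rw [hcL0, zero_smul])]
      exact Submodule.sum_mem _ (fun L hL => Submodule.smul_mem _ _
        (Submodule.subset_span ⟨L, Finset.mem_coe.mpr hL, rfl⟩))
    have hle := cRank_le_card P (S.erase L0)
      (fun L hL => hS1 L (Finset.mem_of_mem_erase hL)) hPerase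
    rw [Finset.card_erase_of_mem hL0] at hle
    have h1 : 1 ≤ S.card := Finset.card_pos.mpr ⟨L0, hL0⟩
    omega
  set P₁ : MvPolynomial (Fin (m + 1)) ℂ := ∑ L ∈ S \ E, c L • L ^ d with hP₁def
  have hP1mem2 : P₁ ∈ Submodule.span ℂ
      ((fun L => L ^ d) '' ((S \ E : Finset _) : Set _)) := by
    exact Submodule.sum_mem _ (fun L hL => Submodule.smul_mem _ _
      (Submodule.subset_span ⟨L, Finset.mem_coe.mpr hL, rfl⟩))
  have hsplit : P₁ + ∑ L ∈ E, c L • L ^ d = P := by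
    rw [hP₁def, Finset.sum_sdiff hES, hcsum]
  have hP1mem1 : P₁ ∈ Submodule.span ℂ
      ({P} ∪ (fun L => L ^ d) '' (E : Set _)) := by
    have h1 : P₁ = P - ∑ L ∈ E, c L • L ^ d := (eq_sub_of_add_eq hsplit)
    rw [h1]
    refine Submodule.sub_mem _ (Submodule.subset_span (Or.inl rfl)) ?_
    exact Submodule.sum_mem _ (fun L hL => Submodule.smul_mem _ _
      (Submodule.subset_span (Or.inr ⟨L, Finset.mem_coe.mpr hL, rfl⟩)))
  obtain ⟨L1, hL1S, hL1E⟩ := Finset.exists_of_ssubset (lt_of_le_of_ne hES hEne)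
  have hP1ne : P₁ ≠ 0 := by
    intro h0
    have hsum0 : ∑ i : {x // x ∈ S},
        (if (i : MvPolynomial (Fin (m + 1)) ℂ) ∈ E then 0 else c (i : _))
          • ((i : MvPolynomial (Fin (m + 1)) ℂ)) ^ d = 0 := by
      rw [Finset.sum_coe_sort S (fun L => (if L ∈ E then (0 : ℂ) else c L) • L ^ d)]
      rw [← Finset.sum_sdiff hES]
      have h1 : ∑ L ∈ E, (if L ∈ E then (0 : ℂ) else c L) • L ^ d = 0 :=
        Finset.sum_eq_zero (fun L hL => by simp [hL])
      have h2 : ∑ L ∈ S \ E, (if L ∈ E then (0 : ℂ) else c L) • L ^ d = P₁ :=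
        Finset.sum_congr rfl (fun L hL => by simp [(Finset.mem_sdiff.mp hL).2])
      rw [h1, h2, h0, add_zero]
    have hg := Fintype.linearIndependent_iff.mp hind _ hsum0 ⟨L1, hL1S⟩
    simp only [hL1E, if_false] at hg
    exact hc0 L1 hL1S hg
  -- intersection equality
  have hinter : Submodule.span ℂ ({P} ∪ (fun L => L ^ d) '' (E : Set _)) ⊓
      Submodule.span ℂ ((fun L => L ^ d) '' ((S \ E : Finset _) : Set _)) =
      Submodule.span ℂ {P₁} := by
    apply le_antisymm
    · rintro Q ⟨hQ1, hQ2⟩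
      rw [Set.singleton_union] at hQ1
      obtain ⟨a, z, hz, hQeq⟩ := Submodule.mem_span_insert.mp hQ1
      rw [img_eq d E] at hz
      obtain ⟨b, -, hb⟩ := Submodule.mem_span_finset.mp hz
      rw [img_eq d (S \ E)] at hQ2
      obtain ⟨e', -, he'⟩ := Submodule.mem_span_finset.mp hQ2
      rw [Finset.sum_image (fun x hx y hy h => hinj x (hES hx) y (hES hy) h)] at hb
      rw [Finset.sum_image (fun x hx y hy h =>
        hinj x (Finset.mem_sdiff.mp hx).1 y (Finset.mem_sdiff.mp hy).1 h)] at he'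
      have hgsum : ∑ i : {x // x ∈ S},
          (if (i : MvPolynomial (Fin (m + 1)) ℂ) ∈ E
            then a * c (i : _) + b (((i : MvPolynomial (Fin (m + 1)) ℂ)) ^ d)
            else a * c (i : _) - e' (((i : MvPolynomial (Fin (m + 1)) ℂ)) ^ d))
            • ((i : MvPolynomial (Fin (m + 1)) ℂ)) ^ d = 0 := by
        rw [Finset.sum_coe_sort S (fun L =>
          (if L ∈ E then a * c L + b (L ^ d) else a * c L - e' (L ^ d)) • L ^ d)]
        rw [← Finset.sum_sdiff hES]
        have h2 : ∑ L ∈ S \ E,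
            (if L ∈ E then a * c L + b (L ^ d) else a * c L - e' (L ^ d)) • L ^ d
            = (∑ L ∈ S \ E, (a * c L) • L ^ d) - Q := by
          rw [← he', ← Finset.sum_sub_distrib]
          exact Finset.sum_congr rfl (fun L hL => by
            rw [if_neg (Finset.mem_sdiff.mp hL).2, sub_smul])
        have h1 : ∑ L ∈ E,
            (if L ∈ E then a * c L + b (L ^ d) else a * c L - e' (L ^ d)) • L ^ d
            = (∑ L ∈ E, (a * c L) • L ^ d) + z := by
          rw [← hb, ← Finset.sum_add_distrib]
          exact Finset.sum_congr rfl (fun L hL => by rw [if_pos hL, add_smul])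
        rw [h2, h1]
        have hA : (∑ L ∈ S \ E, (a * c L) • L ^ d) + (∑ L ∈ E, (a * c L) • L ^ d)
            = a • P := by
          rw [Finset.sum_sdiff hES, ← hcsum, Finset.smul_sum]
          exact Finset.sum_congr rfl (fun L _ => by rw [smul_smul])
        have : ((∑ L ∈ S \ E, (a * c L) • L ^ d) - Q)
            + ((∑ L ∈ E, (a * c L) • L ^ d) + z)
            = ((∑ L ∈ S \ E, (a * c L) • L ^ d) + (∑ L ∈ E, (a * c L) • L ^ d))
              - (a • P) := by
          rw [hQeq]; abel
        rw [this, hA, sub_self]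
      have hzero := Fintype.linearIndependent_iff.mp hind _ hgsum
      have hQP1 : Q = a • P₁ := by
        rw [← he', hP₁def, Finset.smul_sum]
        refine Finset.sum_congr rfl (fun L hL => ?_)
        have hL' := Finset.mem_sdiff.mp hL
        have h0 := hzero ⟨L, hL'.1⟩
        simp only [hL'.2, if_false] at h0
        rw [smul_smul, ← sub_eq_zero.mp h0]
      exact Submodule.mem_span_singleton.mpr ⟨a, hQP1.symm⟩
    · rw [Submodule.span_le, Set.singleton_subset_iff]
      exact Submodule.mem_inf.mpr ⟨hP1mem1, hP1mem2⟩
  -- rank equality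
  have hle : cRank d P₁ ≤ S.card - E.card := by
    have h := cRank_le_card P₁ (S \ E)
      (fun L hL => hS1 L (Finset.mem_sdiff.mp hL).1) hP1mem2
    rwa [Finset.card_sdiff_of_subset hES] at h
  have hge : S.card - E.card ≤ cRank d P₁ := by
    by_contra hlt
    push_neg at hlt
    obtain ⟨k, hk, hkmem⟩ := exists_rep_of_mem_span P₁ (S \ E)
      (fun L hL => hS1 L (Finset.mem_sdiff.mp hL).1) hP1mem2
    have hmem : cRank d P₁ ∈ {r : ℕ | ∃ (c : Fin r → ℂ)
        (L : Fin r → MvPolynomial (Fin (m + 1)) ℂ),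
        (∀ i, c i ≠ 0) ∧ (∀ i, (L i).IsHomogeneous 1) ∧ P₁ = ∑ i, c i • L i ^ d} :=
      Nat.sInf_mem ⟨k, hkmem⟩
    obtain ⟨c', M, hc', hM, hP1eq⟩ := hmem
    have hsplit' : P = (∑ i, c' i • M i ^ d) + ∑ L ∈ E, c L • L ^ d := by
      rw [← hP1eq, hsplit]
    have hPm : P ∈ Submodule.span ℂ ((fun L => L ^ d) ''
        (((E ∪ Finset.image M Finset.univ) : Finset _) : Set _)) := by
      rw [hsplit']
      refine Submodule.add_mem _ ?_ ?_
      · refine Submodule.sum_mem _ (fun i _ => Submodule.smul_mem _ _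
          (Submodule.subset_span ?_))
        exact ⟨M i, Finset.mem_coe.mpr (Finset.mem_union_right _
          (Finset.mem_image_of_mem M (Finset.mem_univ i))), rfl⟩
      · refine Submodule.sum_mem _ (fun L hL => Submodule.smul_mem _ _
          (Submodule.subset_span ?_))
        exact ⟨L, Finset.mem_coe.mpr (Finset.mem_union_left _ hL), rfl⟩
    have hhom : ∀ L ∈ E ∪ Finset.image M Finset.univ, L.IsHomogeneous 1 := by
      intro L hL
      rcases Finset.mem_union.mp hL with h | h
      · exact hS1 L (hES h)
      · obtain ⟨i, _, rfl⟩ := Finset.mem_image.mp h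
        exact hM i
    have hble := cRank_le_card P _ hhom hPm
    have hcu : (E ∪ Finset.image M Finset.univ).card ≤ E.card + cRank d P₁ := by
      refine le_trans (Finset.card_union_le _ _) ?_
      have := Finset.card_image_le (f := M) (s := Finset.univ)
      simp only [Finset.card_univ, Fintype.card_fin] at this
      omega
    have hEcard : E.card ≤ S.card := Finset.card_le_card hES
    omega
  exact ⟨P₁, hP1ne, hinter, le_antisymm hle hge⟩
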